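/- Let V be an almost periodic Banach G-module. Then every closed G-submodule W of finite codimension admits a G-invariant complement: there is a finite-dimensional G-invariant subspace F' with V = F' ⊕ W. -/

import Mathlib

open Set Function MeasureTheory
open scoped Topology
set_option linter.unusedSectionVars false
set_option maxHeartbeats 1000000
set_option synthInstance.maxHeartbeats 400000

namespace Stmt8Aux

variable {Y : Type*} [MetricSpace Y]

lemma surj_of_isometry [CompactSpace Y] {f : Y → Y} (hf : Isometry f) :
    Function.Surjective f := by
  intro x
  by_contra hx
  push_neg at hx
  have hrange : IsClosed (range f) := (isCompact_range hf.continuous).isClosed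
  have hxr : x ∉ range f := by rintro ⟨y, rfl⟩; exact hx y rfl
  have hne : (range f).Nonempty := ⟨f x, mem_range_self x⟩
  have hpos : 0 < Metric.infDist x (range f) :=
    (hrange.notMem_iff_infDist_pos hne).1 hxr
  set ε := Metric.infDist x (range f) with hε
  -- the iterates of x are ε-separated
  have hiter : ∀ n : ℕ, Isometry (f^[n]) := by
    intro n
    induction n with
    | zero => exact isometry_id
    | succ n ih => rw [Function.iterate_succ']; exact hf.comp ih
  have hsep : ∀ n m : ℕ, n < m → ε ≤ dist (f^[n] x) (f^[m] x) := by
    intro n m hnm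
    have hm : m = n + (m - n) := by omega
    have : f^[m] x = f^[n] (f^[m-n] x) := by
      conv_lhs => rw [hm, Function.iterate_add_apply]
    rw [this, (hiter n).dist_eq]
    have hmem : f^[m-n] x ∈ range f := by
      have h1 : m - n - 1 + 1 = m - n := by omega
      rw [← h1, Function.iterate_succ_apply']
      exact mem_range_self _
    exact Metric.infDist_le_dist_of_mem hmem
  obtain ⟨a, -, φ, hφ, hconv⟩ :=
    isCompact_univ.tendsto_subseq (x := fun n => f^[n] x) (fun n => mem_univ _)
  rw [Metric.tendsto_atTop] at hconv
  obtain ⟨N, hN⟩ := hconv (ε/2) (by linarith)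
  have h1 := hN N le_rfl
  have h2 := hN (N+1) (Nat.le_succ N)
  have hlt : dist (f^[φ N] x) (f^[φ (N+1)] x) < ε :=
    calc dist (f^[φ N] x) (f^[φ (N+1)] x)
        ≤ dist (f^[φ N] x) a + dist (f^[φ (N+1)] x) a := dist_triangle_right _ _ _
      _ < ε/2 + ε/2 := by exact add_lt_add h1 h2
      _ = ε := by ring
  exact absurd hlt (not_lt.2 (hsep _ _ (hφ (Nat.lt_succ_self N))))

variable [CompactSpace Y]

lemma dist_comp_left_eq [Nonempty Y] (f g h : C(Y,Y)) (hf : Isometry (f : Y → Y)) :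
    dist (f.comp g) (f.comp h) = dist g h := by
  apply le_antisymm
  · rw [ContinuousMap.dist_le_iff_of_nonempty]
    intro x
    rw [ContinuousMap.comp_apply, ContinuousMap.comp_apply, hf.dist_eq]
    exact ContinuousMap.dist_apply_le_dist x
  · rw [ContinuousMap.dist_le_iff_of_nonempty]
    intro x
    have := ContinuousMap.dist_apply_le_dist (f := f.comp g) (g := f.comp h) x
    rwa [ContinuousMap.comp_apply, ContinuousMap.comp_apply, hf.dist_eq] at this

lemma dist_comp_right_eq [Nonempty Y] (f g s : C(Y,Y)) (hs : Function.Surjective (s : Y → Y)) :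
    dist (f.comp s) (g.comp s) = dist f g := by
  apply le_antisymm
  · rw [ContinuousMap.dist_le_iff_of_nonempty]
    intro x
    exact ContinuousMap.dist_apply_le_dist (s x)
  · rw [ContinuousMap.dist_le_iff_of_nonempty]
    intro y
    obtain ⟨x, rfl⟩ := hs y
    exact ContinuousMap.dist_apply_le_dist (f := f.comp s) (g := g.comp s) x

lemma isometry_of_mem_closure {S : Set C(Y,Y)} (hiso : ∀ f ∈ S, Isometry (f : Y → Y))
    {f : C(Y,Y)} (hf : f ∈ closure S) : Isometry (f : Y → Y) := by
  apply Isometry.of_dist_eq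
  intro x y
  have hcl : IsClosed {g : C(Y,Y) | dist (g x) (g y) = dist x y} :=
    isClosed_eq (Continuous.dist (continuous_eval_const x)
      (continuous_eval_const y)) continuous_const
  exact closure_minimal (fun g hg => (hiso g hg).dist_eq x y) hcl hf

lemma comp_mem_closure {S : Set C(Y,Y)} (hS : ∀ f ∈ S, ∀ g ∈ S, f.comp g ∈ S)
    {f g : C(Y,Y)} (hf : f ∈ closure S) (hg : g ∈ closure S) : f.comp g ∈ closure S := by
  have hcont : Continuous fun p : C(Y,Y) × C(Y,Y) => p.1.comp p.2 :=
    ContinuousMap.continuous_comp'.comp continuous_swap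
  have h1 : (f, g) ∈ closure (S ×ˢ S) := by
    rw [closure_prod_eq]; exact ⟨hf, hg⟩
  have h2 := image_closure_subset_closure_image
    (f := fun p : C(Y,Y) × C(Y,Y) => p.1.comp p.2) hcont (s := S ×ˢ S)
  have h3 : f.comp g ∈ closure ((fun p : C(Y,Y) × C(Y,Y) => p.1.comp p.2) '' (S ×ˢ S)) :=
    h2 (mem_image_of_mem _ h1)
  refine closure_mono ?_ h3
  rintro - ⟨⟨a, b⟩, ⟨ha, hb⟩, rfl⟩
  exact hS a ha b hb

lemma isCompact_closure_of_isometries {S : Set C(Y,Y)}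
    (hiso : ∀ f ∈ S, Isometry (f : Y → Y)) : IsCompact (closure S) := by
  apply ArzelaAscoli.isCompact_closure_of_isClosedEmbedding
    (𝔖 := {K : Set Y | IsCompact K}) (F := fun f : C(Y,Y) => (f : Y → Y))
    (fun K hK => hK)
  · constructor
    · exact ContinuousMap.isUniformEmbedding_toUniformOnFunIsCompact.isEmbedding
    · rw [show (⇑(UniformOnFun.ofFun {K : Set Y | IsCompact K}) ∘ fun f : C(Y,Y) => ⇑f)
          = (ContinuousMap.toUniformOnFunIsCompact : C(Y,Y) → _) from rfl,
        ContinuousMap.range_toUniformOnFunIsCompact]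
      exact UniformOnFun.isClosed_setOf_continuous
        CompactlyCoherentSpace.isCoherentWith
  · intro K hK
    have : Equicontinuous (fun f : S => ((f : C(Y,Y)) : Y → Y)) := by
      intro x
      rw [Metric.equicontinuousAt_iff]
      intro ε hε
      refine ⟨ε, hε, fun y hy i => ?_⟩
      rw [(hiso i i.2).dist_eq]
      rw [dist_comm]
      exact hy
    exact (this.equicontinuousOn K)
  · intro K hK x hx
    exact ⟨univ, isCompact_univ, fun i hi => mem_univ _⟩

/-- iterated composition -/
noncomputable def cpow (f : C(Y,Y)) : ℕ → C(Y,Y)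
  | 0 => ContinuousMap.id Y
  | (n+1) => f.comp (cpow f n)

lemma cpow_add (f : C(Y,Y)) (m n : ℕ) : cpow f (m + n) = (cpow f m).comp (cpow f n) := by
  induction m with
  | zero => simp [cpow, ContinuousMap.id_comp]
  | succ m ih =>
    have : m + 1 + n = (m + n) + 1 := by omega
    rw [this]
    show f.comp (cpow f (m + n)) = (f.comp (cpow f m)).comp (cpow f n)
    rw [ih, ContinuousMap.comp_assoc]

lemma cpow_mem {S : Set C(Y,Y)} (hid : ContinuousMap.id Y ∈ S)
    (hS : ∀ f ∈ S, ∀ g ∈ S, f.comp g ∈ S) {f : C(Y,Y)} (hf : f ∈ closure S) (n : ℕ) :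
    cpow f n ∈ closure S := by
  induction n with
  | zero => exact subset_closure hid
  | succ n ih => exact comp_mem_closure hS hf ih

lemma exists_inverse [Nonempty Y] {S : Set C(Y,Y)} (hid : ContinuousMap.id Y ∈ S)
    (hS : ∀ f ∈ S, ∀ g ∈ S, f.comp g ∈ S) (hiso : ∀ f ∈ S, Isometry (f : Y → Y))
    {f : C(Y,Y)} (hf : f ∈ closure S) :
    ∃ g ∈ closure S, f.comp g = ContinuousMap.id Y ∧ g.comp f = ContinuousMap.id Y := by
  have hfi : Isometry (f : Y → Y) := isometry_of_mem_closure hiso hf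
  have hfs : Function.Surjective (f : Y → Y) := surj_of_isometry hfi
  let e : Y ≃ Y := Equiv.ofBijective f ⟨hfi.injective, hfs⟩
  have hsymm_iso : Isometry (e.symm : Y → Y) := by
    apply Isometry.of_dist_eq
    intro a b
    have : dist (f (e.symm a)) (f (e.symm b)) = dist a b := by
      have h1 : f (e.symm a) = a := e.apply_symm_apply a
      have h2 : f (e.symm b) = b := e.apply_symm_apply b
      rw [h1, h2]
    rw [← this, hfi.dist_eq]
  let g : C(Y,Y) := ⟨e.symm, hsymm_iso.continuous⟩
  have hfg : f.comp g = ContinuousMap.id Y := by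
    ext x; exact e.apply_symm_apply x
  have hgf : g.comp f = ContinuousMap.id Y := by
    ext x; exact e.symm_apply_apply x
  refine ⟨g, ?_, hfg, hgf⟩
  -- g is in the closure since it is approximated by powers of f
  have hclosed : closure (closure S) = closure S := closure_closure
  rw [← hclosed, Metric.mem_closure_iff]
  intro ε hε
  obtain ⟨a, -, φ, hφ, hconv⟩ :=
    (isCompact_closure_of_isometries hiso).tendsto_subseq
      (x := fun n => cpow f n) (cpow_mem hid hS hf)
  rw [Metric.tendsto_atTop] at hconv
  obtain ⟨N, hN⟩ := hconv (ε/2) (by linarith)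
  have h1 := hN N le_rfl
  have h2 := hN (N+1) (Nat.le_succ N)
  have hnm : φ N < φ (N+1) := hφ (Nat.lt_succ_self N)
  set n := φ N
  set m := φ (N+1)
  have hd : dist (cpow f n) (cpow f m) < ε :=
    calc dist (cpow f n) (cpow f m)
        ≤ dist (cpow f n) a + dist (cpow f m) a := dist_triangle_right _ _ _
      _ < ε/2 + ε/2 := add_lt_add h1 h2
      _ = ε := by ring
  set k := m - n with hk
  have hk1 : 1 ≤ k := by omega
  have hmk : cpow f m = (cpow f n).comp (cpow f k) := by
    rw [← cpow_add]; congr 1; omega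
  have hiso_n : Isometry ((cpow f n : C(Y,Y)) : Y → Y) :=
    isometry_of_mem_closure hiso (cpow_mem hid hS hf n)
  have h3 : dist (ContinuousMap.id Y) (cpow f k) = dist (cpow f n) (cpow f m) := by
    rw [hmk, ← dist_comp_left_eq (cpow f n) (ContinuousMap.id Y) (cpow f k) hiso_n,
      ContinuousMap.comp_id]
  have h4 : f.comp (cpow f (k-1)) = cpow f k := by
    have : k - 1 + 1 = k := by omega
    rw [← this]
    rfl
  have h5 : dist g (cpow f (k-1)) = dist (ContinuousMap.id Y) (cpow f k) := by
    rw [← dist_comp_left_eq f g (cpow f (k-1)) hfi, hfg, h4]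
  refine ⟨cpow f (k-1), cpow_mem hid hS hf (k-1), ?_⟩
  rw [h5, h3]
  exact hd

/-- A family of isometries of `Y`, closed under composition and containing the identity. -/
structure IsoMonoid (Y : Type*) [MetricSpace Y] where
  carrier : Set C(Y,Y)
  id_mem : ContinuousMap.id Y ∈ carrier
  comp_mem : ∀ f ∈ carrier, ∀ g ∈ carrier, f.comp g ∈ carrier
  isom : ∀ f ∈ carrier, Isometry (f : Y → Y)

/-- The closure of the family, as a type. -/
def IsoMonoid.GamT {Y : Type*} [MetricSpace Y] (M : IsoMonoid Y) : Type _ :=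
  {f : C(Y,Y) // f ∈ closure M.carrier}

namespace IsoMonoid

variable [Nonempty Y] (M : IsoMonoid Y)

noncomputable instance : MetricSpace M.GamT :=
  inferInstanceAs (MetricSpace {f : C(Y,Y) // f ∈ closure M.carrier})

instance : CompactSpace M.GamT := by
  exact isCompact_iff_compactSpace.mp (isCompact_closure_of_isometries M.isom)

instance : Nonempty M.GamT := ⟨⟨ContinuousMap.id Y, subset_closure M.id_mem⟩⟩

noncomputable instance : Group M.GamT where
  mul f g := ⟨f.1.comp g.1, comp_mem_closure M.comp_mem f.2 g.2⟩
  one := ⟨ContinuousMap.id Y, subset_closure M.id_mem⟩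
  inv f := ⟨Classical.choose (exists_inverse M.id_mem M.comp_mem M.isom f.2),
    (Classical.choose_spec (exists_inverse M.id_mem M.comp_mem M.isom f.2)).1⟩
  mul_assoc f g h := Subtype.ext (ContinuousMap.comp_assoc f.1 g.1 h.1)
  one_mul f := Subtype.ext (ContinuousMap.id_comp f.1)
  mul_one f := Subtype.ext (ContinuousMap.comp_id f.1)
  inv_mul_cancel f := Subtype.ext
    (Classical.choose_spec (exists_inverse M.id_mem M.comp_mem M.isom f.2)).2.2

lemma mul_val (f g : M.GamT) : (f * g).1 = f.1.comp g.1 := rfl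

lemma one_val : (1 : M.GamT).1 = ContinuousMap.id Y := rfl

lemma inv_spec (f : M.GamT) :
    f.1.comp (f⁻¹).1 = ContinuousMap.id Y ∧ (f⁻¹).1.comp f.1 = ContinuousMap.id Y := by
  have h := Classical.choose_spec (exists_inverse M.id_mem M.comp_mem M.isom f.2)
  exact ⟨h.2.1, h.2.2⟩

lemma dist_val (f g : M.GamT) : dist f g = dist f.1 g.1 := rfl

noncomputable instance : IsTopologicalGroup M.GamT where
  continuous_mul := by
    apply Continuous.subtype_mk
    have h1 : Continuous fun p : M.GamT × M.GamT => (p.2.1, p.1.1) :=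
      ((continuous_subtype_val.comp continuous_snd).prodMk
        (continuous_subtype_val.comp continuous_fst))
    exact ContinuousMap.continuous_comp'.comp h1
  continuous_inv := by
    have hiso : Isometry (fun f : M.GamT => f⁻¹) := by
      apply Isometry.of_dist_eq
      intro f g
      rw [dist_val, dist_val]
      have hfi : Isometry (f.1 : Y → Y) := isometry_of_mem_closure M.isom f.2
      have hgi : Isometry ((g⁻¹).1 : Y → Y) := isometry_of_mem_closure M.isom (g⁻¹).2
      have hgs : Function.Surjective ((g⁻¹).1 : Y → Y) := surj_of_isometry hgi
      calc dist (f⁻¹).1 (g⁻¹).1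
          = dist (f.1.comp (f⁻¹).1) (f.1.comp (g⁻¹).1) :=
            (dist_comp_left_eq _ _ _ hfi).symm
        _ = dist (ContinuousMap.id Y) (f.1.comp (g⁻¹).1) := by
            rw [(M.inv_spec f).1]
        _ = dist (g.1.comp (g⁻¹).1) (f.1.comp (g⁻¹).1) := by
            rw [(M.inv_spec g).1]
        _ = dist g.1 f.1 := dist_comp_right_eq _ _ _ hgs
        _ = dist f.1 g.1 := dist_comm _ _
    exact hiso.continuous

noncomputable instance : MeasurableSpace M.GamT := borel _

instance : BorelSpace M.GamT := ⟨rfl⟩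

theorem exists_invariantMeasure [MeasurableSpace Y] [BorelSpace Y] :
    ∃ μ : Measure Y, IsProbabilityMeasure μ ∧
      ∀ f ∈ M.carrier, Measure.map (f : Y → Y) μ = μ := by
  have z₀ : Y := Classical.arbitrary Y
  let K : TopologicalSpace.PositiveCompacts M.GamT :=
    ⟨⟨univ, isCompact_univ⟩, by rw [interior_univ]; exact univ_nonempty⟩
  let ν := Measure.haarMeasure K
  have hν1 : ν univ = 1 := by
    have := Measure.haarMeasure_self (K₀ := K)
    exact this
  haveI : IsProbabilityMeasure ν := ⟨hν1⟩
  let ev : M.GamT → Y := fun γ => γ.1 z₀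
  have hev : Continuous ev :=
    (continuous_eval_const z₀).comp continuous_subtype_val
  refine ⟨ν.map ev, Measure.isProbabilityMeasure_map hev.aemeasurable, ?_⟩
  intro f hf
  set γf : M.GamT := ⟨f, subset_closure hf⟩ with hγf
  have hmul : Continuous fun γ : M.GamT => γf * γ := continuous_mul_left γf
  have hfc : Continuous (f : Y → Y) := f.continuous
  calc (ν.map ev).map (f : Y → Y)
      = ν.map ((f : Y → Y) ∘ ev) := Measure.map_map hfc.measurable hev.measurable
    _ = ν.map (ev ∘ fun γ => γf * γ) := rfl
    _ = (ν.map (fun γ => γf * γ)).map ev :=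
        (Measure.map_map hev.measurable hmul.measurable).symm
    _ = ν.map ev := by rw [map_mul_left_eq_self]

end IsoMonoid

section Part2

open ContinuousLinearMap

variable {G V E : Type*} [Group G]
  [NormedAddCommGroup V] [NormedSpace ℝ V] [CompleteSpace V]
  [NormedAddCommGroup E] [NormedSpace ℝ E] [FiniteDimensional ℝ E]

/-- Packaged data: an almost periodic representation `rho` on `V`, an equivariant
surjection `pi` onto a finite-dimensional space `E` (with induced action `rhoQ`),
and a bounded linear section `L0` of `pi`. -/
structure Pack (G V E : Type*) [Group G] [NormedAddCommGroup V] [NormedSpace ℝ V]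
    [NormedAddCommGroup E] [NormedSpace ℝ E] where
  rho : G →* (V →L[ℝ] V)
  pi : V →L[ℝ] E
  rhoQ : G → (E →L[ℝ] E)
  L0 : E →L[ℝ] V
  C : ℝ
  hC1 : (1:ℝ) ≤ C
  hC : ∀ g, ‖rho g‖ ≤ C
  hCQ : ∀ g, ‖rhoQ g‖ ≤ C
  hcomm : ∀ g v, pi (rho g v) = rhoQ g (pi v)
  hL0 : ∀ x, pi (L0 x) = x
  hap : ∀ v : V, IsCompact (closure (Set.range fun g => rho g v))

namespace Pack

variable (P : Pack G V E)

lemma hC0 : (0:ℝ) < P.C := lt_of_lt_of_le one_pos P.hC1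

lemma rhoQ_mul (g h : G) (x : E) : P.rhoQ (g*h) x = P.rhoQ g (P.rhoQ h x) := by
  have hx : x = P.pi (P.L0 x) := (P.hL0 x).symm
  conv_lhs => rw [hx, ← P.hcomm]
  conv_rhs => rw [hx, ← P.hcomm, ← P.hcomm]
  rw [map_mul]
  rfl

lemma rhoQ_one (x : E) : P.rhoQ 1 x = x := by
  have hx : x = P.pi (P.L0 x) := (P.hL0 x).symm
  conv_lhs => rw [hx, ← P.hcomm]
  rw [map_one]
  conv_rhs => rw [hx]
  rfl

lemma rhoQ_inv_apply (g : G) (x : E) : P.rhoQ g⁻¹ (P.rhoQ g x) = x := by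
  rw [← P.rhoQ_mul, inv_mul_cancel, P.rhoQ_one]

lemma rhoQ_apply_inv (g : G) (x : E) : P.rhoQ g (P.rhoQ g⁻¹ x) = x := by
  rw [← P.rhoQ_mul, mul_inv_cancel, P.rhoQ_one]

/-- The action on the space of continuous linear maps `E →L[ℝ] V`. -/
noncomputable def AgL (g : G) : (E →L[ℝ] V) →L[ℝ] (E →L[ℝ] V) :=
  (ContinuousLinearMap.compL ℝ E V V (P.rho g)).comp
    ((ContinuousLinearMap.compL ℝ E E V).flip (P.rhoQ g⁻¹))

lemma AgL_eq (g : G) (L : E →L[ℝ] V) :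
    P.AgL g L = ((P.rho g).comp L).comp (P.rhoQ g⁻¹) := rfl

lemma AgL_apply (g : G) (L : E →L[ℝ] V) (x : E) :
    P.AgL g L x = P.rho g (L (P.rhoQ g⁻¹ x)) := rfl

lemma AgL_mul (g h : G) (L : E →L[ℝ] V) :
    P.AgL g (P.AgL h L) = P.AgL (g*h) L := by
  ext x
  rw [AgL_apply, AgL_apply, AgL_apply, mul_inv_rev, P.rhoQ_mul h⁻¹ g⁻¹, map_mul]
  rfl

lemma AgL_one (L : E →L[ℝ] V) : P.AgL 1 L = L := by
  ext x
  rw [AgL_apply, inv_one, P.rhoQ_one, map_one]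
  rfl

lemma norm_AgL_le (g : G) (M : E →L[ℝ] V) : ‖P.AgL g M‖ ≤ P.C^2 * ‖M‖ := by
  rw [AgL_eq]
  have h1 : ‖((P.rho g).comp M).comp (P.rhoQ g⁻¹)‖ ≤ ‖(P.rho g).comp M‖ * ‖P.rhoQ g⁻¹‖ :=
    opNorm_comp_le _ _
  have h2 : ‖(P.rho g).comp M‖ ≤ ‖P.rho g‖ * ‖M‖ := opNorm_comp_le _ _
  have h3 := P.hC g
  have h4 := P.hCQ g⁻¹
  have h5 : (0:ℝ) ≤ ‖M‖ := norm_nonneg M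
  have h7 : (0:ℝ) ≤ ‖P.rhoQ g⁻¹‖ := norm_nonneg _
  have h9 := P.hC0
  calc ‖((P.rho g).comp M).comp (P.rhoQ g⁻¹)‖
      ≤ ‖(P.rho g).comp M‖ * ‖P.rhoQ g⁻¹‖ := h1
    _ ≤ (‖P.rho g‖ * ‖M‖) * P.C :=
        mul_le_mul h2 h4 h7 (by positivity)
    _ ≤ (P.C * ‖M‖) * P.C := by
        apply mul_le_mul_of_nonneg_right _ (le_of_lt h9)
        exact mul_le_mul_of_nonneg_right h3 h5
    _ = P.C^2 * ‖M‖ := by ring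

/-- The orbit of the reference section. -/
noncomputable def Lg (g : G) : E →L[ℝ] V := P.AgL g P.L0

/-- The orbit closure. -/
noncomputable def Zs : Set (E →L[ℝ] V) := closure (Set.range P.Lg)

lemma Lg_mem (g : G) : P.Lg g ∈ P.Zs := subset_closure (Set.mem_range_self g)

lemma AgL_mapsTo (g : G) : Set.MapsTo (P.AgL g) P.Zs P.Zs := by
  have h1 : Set.MapsTo (P.AgL g) (Set.range P.Lg) (Set.range P.Lg) := by
    rintro - ⟨h, rfl⟩
    exact ⟨g*h, (P.AgL_mul g h P.L0).symm⟩
  have := h1.closure (P.AgL g).continuous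
  exact this

lemma pi_comp_Zs : ∀ L ∈ P.Zs, ∀ x, P.pi (L x) = x := by
  have hA : IsClosed {L : E →L[ℝ] V | ∀ x, P.pi (L x) = x} := by
    have : {L : E →L[ℝ] V | ∀ x, P.pi (L x) = x} =
        ⋂ x : E, {L : E →L[ℝ] V | P.pi (L x) = x} := by
      ext L; simp [Set.mem_iInter]
    rw [this]
    apply isClosed_iInter
    intro x
    apply isClosed_eq _ continuous_const
    exact P.pi.continuous.comp (ContinuousLinearMap.apply ℝ V x).continuous
  have hsub : Set.range P.Lg ⊆ {L : E →L[ℝ] V | ∀ x, P.pi (L x) = x} := by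
    rintro - ⟨g, rfl⟩ x
    rw [Lg, AgL_apply, P.hcomm, P.hL0, P.rhoQ_apply_inv]
  intro L hL
  exact closure_minimal hsub hA hL

lemma isCompact_closure_orbitUnion {S : Set V} (hS : IsCompact S) :
    IsCompact (closure (⋃ s ∈ S, Set.range fun g => P.rho g s)) := by
  apply TotallyBounded.isCompact_of_isClosed _ isClosed_closure
  apply TotallyBounded.closure
  rw [Metric.totallyBounded_iff]
  intro ε hε
  have hδ : 0 < ε / (2 * P.C) := div_pos hε (mul_pos two_pos P.hC0)
  obtain ⟨t₀, ht₀fin, ht₀⟩ := (Metric.totallyBounded_iff.mp hS.totallyBounded) _ hδ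
  have horb : ∀ y : V, ∃ t : Set V, t.Finite ∧
      (Set.range fun g => P.rho g y) ⊆ ⋃ z ∈ t, Metric.ball z (ε/2) := by
    intro y
    exact Metric.totallyBounded_iff.mp
      (TotallyBounded.subset subset_closure (P.hap y).totallyBounded) _ (half_pos hε)
  choose N hNfin hN using horb
  refine ⟨⋃ y ∈ t₀, N y, ht₀fin.biUnion (fun y _ => hNfin y), ?_⟩
  rintro v hv
  simp only [Set.mem_iUnion] at hv
  obtain ⟨s, hsS, g, rfl⟩ := hv
  have hsc := ht₀ hsS
  simp only [Set.mem_iUnion] at hsc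
  obtain ⟨y, hyt, hsy⟩ := hsc
  have h5 : dist (P.rho g s) (P.rho g y) < ε/2 := by
    rw [dist_eq_norm, ← map_sub]
    calc ‖P.rho g (s - y)‖ ≤ ‖P.rho g‖ * ‖s - y‖ := le_opNorm _ _
      _ ≤ P.C * ‖s - y‖ :=
          mul_le_mul_of_nonneg_right (P.hC g) (norm_nonneg _)
      _ < P.C * (ε / (2 * P.C)) := by
          apply mul_lt_mul_of_pos_left _ P.hC0
          rw [← dist_eq_norm]
          exact hsy
      _ = ε/2 := by
          have hCne : P.C ≠ 0 := ne_of_gt P.hC0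
          field_simp
  have h6 := hN y ⟨g, rfl⟩
  simp only [Set.mem_iUnion] at h6
  obtain ⟨z, hzN, hz⟩ := h6
  simp only [Set.mem_iUnion]
  refine ⟨z, ⟨y, hyt, hzN⟩, ?_⟩
  rw [Metric.mem_ball]
  calc dist (P.rho g s) z ≤ dist (P.rho g s) (P.rho g y) + dist (P.rho g y) z :=
        dist_triangle _ _ _
    _ < ε/2 + ε/2 := add_lt_add h5 (Metric.mem_ball.mp hz)
    _ = ε := by ring

lemma isCompact_Zs : IsCompact P.Zs := by
  classical
  set n := Module.finrank ℝ E with hn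
  let b : Module.Basis (Fin n) ℝ E := Module.finBasis ℝ E
  let c : Fin n → (E →L[ℝ] ℝ) := fun i => LinearMap.toContinuousLinearMap (b.coord i)
  let recon : (Fin n → V) → (E →L[ℝ] V) := fun f => ∑ i, (c i).smulRight (f i)
  have hrecon_cont : Continuous recon := by
    apply continuous_finset_sum
    intro i _
    exact (ContinuousLinearMap.smulRightL ℝ E V (c i)).continuous.comp (continuous_apply i)
  have hrecon_eq : ∀ L : E →L[ℝ] V, recon (fun i => L (b i)) = L := by
    intro L
    ext x
    have hx : ∑ i, b.repr x i • b i = x := b.sum_repr x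
    calc recon (fun i => L (b i)) x = ∑ i, b.repr x i • L (b i) := by
          simp [recon, ContinuousLinearMap.sum_apply, ContinuousLinearMap.smulRight_apply, c,
            Module.Basis.coord_apply, LinearMap.coe_toContinuousLinearMap']
      _ = ∑ i, L (b.repr x i • b i) := by
          simp only [ContinuousLinearMap.map_smul]
      _ = L (∑ i, b.repr x i • b i) := by rw [map_sum]
      _ = L x := by rw [hx]
  let Q : Fin n → Set V := fun i =>
    closure (⋃ s ∈ (P.L0 '' Metric.closedBall 0 (P.C * ‖b i‖)), Set.range fun g => P.rho g s)
  have hQ : ∀ i, IsCompact (Q i) :=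
    fun i => P.isCompact_closure_orbitUnion
      ((isCompact_closedBall 0 _).image P.L0.continuous)
  have hK : IsCompact (Set.pi Set.univ Q) := isCompact_univ_pi hQ
  have hsub : Set.range P.Lg ⊆ recon '' (Set.pi Set.univ Q) := by
    rintro - ⟨g, rfl⟩
    refine ⟨fun i => P.Lg g (b i), ?_, hrecon_eq (P.Lg g)⟩
    intro i _
    show P.Lg g (b i) ∈ Q i
    have h1 : P.Lg g (b i) = P.rho g (P.L0 (P.rhoQ g⁻¹ (b i))) := rfl
    rw [h1]
    apply subset_closure
    simp only [Set.mem_iUnion]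
    refine ⟨P.L0 (P.rhoQ g⁻¹ (b i)), ⟨P.rhoQ g⁻¹ (b i), ?_, rfl⟩, g, rfl⟩
    rw [Metric.mem_closedBall, dist_zero_right]
    calc ‖P.rhoQ g⁻¹ (b i)‖ ≤ ‖P.rhoQ g⁻¹‖ * ‖b i‖ := le_opNorm _ _
      _ ≤ P.C * ‖b i‖ := mul_le_mul_of_nonneg_right (P.hCQ g⁻¹) (norm_nonneg _)
  have himg : IsCompact (recon '' (Set.pi Set.univ Q)) := hK.image hrecon_cont
  exact IsCompact.of_isClosed_subset himg isClosed_closure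
    (closure_minimal hsub himg.isClosed)

/-- The invariant distance function. -/
noncomputable def Dd (L L' : E →L[ℝ] V) : ℝ := ⨆ g : G, ‖P.AgL g (L - L')‖

lemma bddAbove_Dd (M : E →L[ℝ] V) :
    BddAbove (Set.range fun g : G => ‖P.AgL g M‖) :=
  ⟨P.C^2 * ‖M‖, by rintro - ⟨g, rfl⟩; exact P.norm_AgL_le g M⟩

lemma norm_le_Dd (L L' : E →L[ℝ] V) : ‖L - L'‖ ≤ P.Dd L L' := by
  have h := le_ciSup (P.bddAbove_Dd (L - L')) (1 : G)
  rwa [P.AgL_one] at h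

lemma Dd_le (L L' : E →L[ℝ] V) : P.Dd L L' ≤ P.C^2 * ‖L - L'‖ :=
  ciSup_le fun g => P.norm_AgL_le g (L - L')

lemma Dd_self (L : E →L[ℝ] V) : P.Dd L L = 0 := by
  have h : ∀ g : G, ‖P.AgL g (L - L)‖ = (0:ℝ) := fun g => by simp
  rw [Dd]
  simp only [h]
  exact ciSup_const

lemma Dd_comm (L L' : E →L[ℝ] V) : P.Dd L L' = P.Dd L' L := by
  unfold Dd
  congr 1
  funext g
  rw [← neg_sub L' L, map_neg, norm_neg]

lemma Dd_triangle (L1 L2 L3 : E →L[ℝ] V) :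
    P.Dd L1 L3 ≤ P.Dd L1 L2 + P.Dd L2 L3 := by
  apply ciSup_le
  intro g
  have h : L1 - L3 = (L1 - L2) + (L2 - L3) := by abel
  rw [h, map_add]
  calc ‖P.AgL g (L1 - L2) + P.AgL g (L2 - L3)‖
      ≤ ‖P.AgL g (L1 - L2)‖ + ‖P.AgL g (L2 - L3)‖ := norm_add_le _ _
    _ ≤ P.Dd L1 L2 + P.Dd L2 L3 :=
        add_le_add (le_ciSup (P.bddAbove_Dd _) g) (le_ciSup (P.bddAbove_Dd _) g)

lemma Dd_inv (h : G) (L L' : E →L[ℝ] V) :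
    P.Dd (P.AgL h L) (P.AgL h L') = P.Dd L L' := by
  unfold Dd
  rw [← map_sub]
  have hr : (Set.range fun g : G => ‖P.AgL g (P.AgL h (L - L'))‖)
      = Set.range fun g : G => ‖P.AgL g (L - L')‖ := by
    ext x
    constructor
    · rintro ⟨g, rfl⟩
      refine ⟨g * h, ?_⟩
      show ‖P.AgL (g*h) (L - L')‖ = ‖P.AgL g (P.AgL h (L - L'))‖
      rw [P.AgL_mul]
    · rintro ⟨k, rfl⟩
      refine ⟨k * h⁻¹, ?_⟩
      show ‖P.AgL (k * h⁻¹) (P.AgL h (L - L'))‖ = ‖P.AgL k (L - L')‖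
      rw [P.AgL_mul, inv_mul_cancel_right]
  rw [iSup, iSup, hr]

end Pack

/-- The orbit closure, equipped with the invariant metric. -/
structure YT {G V E : Type*} [Group G] [NormedAddCommGroup V] [NormedSpace ℝ V]
    [NormedAddCommGroup E] [NormedSpace ℝ E] (P : Pack G V E) where
  val : E →L[ℝ] V
  prop : val ∈ P.Zs

namespace YT

variable (P : Pack G V E)

lemma val_inj {a b : YT P} (h : a.val = b.val) : a = b := by
  cases a; cases b; simp_all

noncomputable instance : MetricSpace (YT P) where
  dist x y := P.Dd x.val y.val
  dist_self x := P.Dd_self x.val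
  dist_comm x y := P.Dd_comm x.val y.val
  dist_triangle x y z := P.Dd_triangle x.val y.val z.val
  eq_of_dist_eq_zero := by
    intro x y h
    have h' : P.Dd x.val y.val = 0 := h
    have h2 : ‖x.val - y.val‖ ≤ 0 := by
      have := P.norm_le_Dd x.val y.val
      rw [h'] at this
      exact this
    have h3 : x.val - y.val = 0 :=
      norm_eq_zero.mp (le_antisymm h2 (norm_nonneg _))
    exact val_inj P (sub_eq_zero.mp h3)

lemma dist_eq (x y : YT P) : dist x y = P.Dd x.val y.val := rfl

instance : CompactSpace (YT P) := by
  constructor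
  haveI : CompactSpace {L : E →L[ℝ] V // L ∈ P.Zs} :=
    isCompact_iff_compactSpace.mp P.isCompact_Zs
  let j : {L : E →L[ℝ] V // L ∈ P.Zs} → YT P := fun L => ⟨L.1, L.2⟩
  have hj : Continuous j := by
    apply LipschitzWith.continuous (K := Real.toNNReal (P.C^2))
    apply LipschitzWith.of_dist_le_mul
    intro a b
    have h1 : dist (j a) (j b) = P.Dd a.1 b.1 := rfl
    rw [h1, Subtype.dist_eq, dist_eq_norm]
    calc P.Dd a.1 b.1 ≤ P.C^2 * ‖a.1 - b.1‖ := P.Dd_le a.1 b.1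
      _ = Real.toNNReal (P.C^2) * ‖a.1 - b.1‖ := by
          rw [Real.coe_toNNReal _ (by positivity)]
  have hr : Set.range j = Set.univ :=
    Set.eq_univ_of_forall (fun y => ⟨⟨y.val, y.prop⟩, rfl⟩)
  rw [← hr]
  exact isCompact_range hj

instance : Nonempty (YT P) := ⟨⟨P.Lg 1, P.Lg_mem 1⟩⟩

end YT

namespace Pack

variable (P : Pack G V E)

/-- The `G`-action on the orbit closure, by isometries. -/
noncomputable def phi (g : G) : C(YT P, YT P) where
  toFun y := ⟨P.AgL g y.val, P.AgL_mapsTo g y.prop⟩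
  continuous_toFun := by
    have h : Isometry (fun y : YT P => (⟨P.AgL g y.val, P.AgL_mapsTo g y.prop⟩ : YT P)) := by
      apply Isometry.of_dist_eq
      intro a b
      rw [YT.dist_eq, YT.dist_eq]
      exact P.Dd_inv g a.val b.val
    exact h.continuous

lemma phi_isometry (g : G) : Isometry (P.phi g : YT P → YT P) := by
  apply Isometry.of_dist_eq
  intro a b
  rw [YT.dist_eq, YT.dist_eq]
  exact P.Dd_inv g a.val b.val

/-- The isometry monoid of the action. -/
noncomputable def Ms : IsoMonoid (YT P) where
  carrier := Set.range P.phi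
  id_mem := ⟨1, by ext y; exact YT.val_inj P (P.AgL_one y.val)⟩
  comp_mem := by
    rintro - ⟨g, rfl⟩ - ⟨h, rfl⟩
    exact ⟨g * h, by ext y; exact YT.val_inj P (P.AgL_mul g h y.val).symm⟩
  isom := by rintro - ⟨g, rfl⟩; exact P.phi_isometry g

/-- Existence of an invariant bounded lift. -/
theorem exists_invariant_lift :
    ∃ Lst : E →L[ℝ] V, (∀ x, P.pi (Lst x) = x) ∧
      ∀ g, ((P.rho g).comp Lst).comp (P.rhoQ g⁻¹) = Lst := by
  classical
  letI : MeasurableSpace (YT P) := borel _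
  haveI : BorelSpace (YT P) := ⟨rfl⟩
  haveI : SecondCountableTopology (YT P) := EMetric.secondCountable_of_sigmaCompact _
  obtain ⟨μ, hμprob, hμinv⟩ := (P.Ms).exists_invariantMeasure
  let ι : YT P → (E →L[ℝ] V) := fun y => y.val
  have hι : Continuous ι := by
    apply LipschitzWith.continuous (K := 1)
    apply LipschitzWith.of_dist_le_mul
    intro a b
    rw [dist_eq_norm, YT.dist_eq]
    simpa using P.norm_le_Dd a.val b.val
  obtain ⟨y₀, -, hy₀⟩ := isCompact_univ.exists_isMaxOn Set.univ_nonempty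
    (hι.norm.continuousOn)
  have hint : MeasureTheory.Integrable ι μ := by
    refine ⟨hι.aestronglyMeasurable, ?_⟩
    apply MeasureTheory.HasFiniteIntegral.of_bounded (C := ‖ι y₀‖)
    exact MeasureTheory.ae_of_all μ (fun y => hy₀ (Set.mem_univ y))
  set Lst : E →L[ℝ] V := ∫ y, ι y ∂μ with hLst
  have hinv : ∀ g, P.AgL g Lst = Lst := by
    intro g
    have h1 : P.AgL g Lst = ∫ y, P.AgL g (ι y) ∂μ :=
      (ContinuousLinearMap.integral_comp_comm (P.AgL g) hint).symm
    have h2 : ∀ y : YT P, P.AgL g (ι y) = ι (P.phi g y) := fun y => rfl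
    have h3 : ∫ y, ι (P.phi g y) ∂μ = ∫ y, ι y ∂μ := by
      have hmap := hμinv (P.phi g) ⟨g, rfl⟩
      have h4 : ∫ y, ι y ∂(MeasureTheory.Measure.map (P.phi g) μ) = ∫ y, ι (P.phi g y) ∂μ := by
        apply MeasureTheory.integral_map (P.phi g).continuous.aemeasurable
        rw [hmap]
        exact hι.aestronglyMeasurable
      rw [← h4, hmap]
    rw [h1]
    simp only [h2]
    rw [h3]
  have hlift : ∀ x, P.pi (Lst x) = x := by
    let cmp : (E →L[ℝ] V) →L[ℝ] (E →L[ℝ] E) := ContinuousLinearMap.compL ℝ E V E P.pi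
    have h1 : cmp Lst = ∫ y, cmp (ι y) ∂μ :=
      (ContinuousLinearMap.integral_comp_comm cmp hint).symm
    have h2 : ∀ y : YT P, cmp (ι y) = ContinuousLinearMap.id ℝ E := by
      intro y
      ext x
      exact P.pi_comp_Zs y.val y.prop x
    have h3 : cmp Lst = ContinuousLinearMap.id ℝ E := by
      rw [h1]
      simp only [h2]
      rw [MeasureTheory.integral_const]
      simp [hμprob.measure_univ]
    intro x
    have := ContinuousLinearMap.ext_iff.mp h3 x
    exact this
  refine ⟨Lst, hlift, ?_⟩
  intro g
  have := hinv g
  rwa [AgL_eq] at this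

end Pack

end Part2

end Stmt8Aux

/-- in an almost periodic Banach `G`-module, every closed invariant subspace
of finite codimension admits a finite-dimensional invariant complement. -/
theorem stmt8 {G V : Type*} [Group G] [TopologicalSpace G]
    [NormedAddCommGroup V] [NormedSpace ℝ V] [CompleteSpace V]
    (ρ : G →* (V →L[ℝ] V)) (hcont : ∀ v : V, Continuous fun g => ρ g v)
    (hub : ∃ Cb : ℝ, ∀ g : G, ‖ρ g‖ ≤ Cb)
    (hap : ∀ v : V, IsCompact (closure (Set.range fun g => ρ g v)))
    (W : Submodule ℝ V) (hWclosed : IsClosed (W : Set V))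
    [FiniteDimensional ℝ (V ⧸ W)]
    (hWinv : ∀ g : G, ∀ v ∈ W, ρ g v ∈ W) :
    ∃ F : Submodule ℝ V, FiniteDimensional ℝ F ∧ (∀ g : G, ∀ v ∈ F, ρ g v ∈ F) ∧
      IsCompl F W := by
  classical
  haveI : IsClosed (W : Set V) := hWclosed
  obtain ⟨Cb, hCb⟩ := hub
  -- the quotient map as a continuous linear map
  let pi0 : V →L[ℝ] (V ⧸ W) :=
    LinearMap.mkContinuous W.mkQ 1 (fun v => by
      rw [one_mul]
      simpa [Submodule.mkQ_apply] using Submodule.Quotient.norm_mk_le W v)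
  have hpi0 : ∀ v, pi0 v = W.mkQ v := fun v => rfl
  -- a bounded linear section
  obtain ⟨s, hs⟩ := W.mkQ.exists_rightInverse_of_surjective (Submodule.range_mkQ W)
  have hsx : ∀ x, W.mkQ (s x) = x := fun x => by
    have h := LinearMap.ext_iff.mp hs x
    simpa using h
  let L0' : (V ⧸ W) →L[ℝ] V := LinearMap.toContinuousLinearMap s
  have hL0' : ∀ x, L0' x = s x := fun x => rfl
  -- the induced action on the quotient
  let rhoQ' : G → ((V ⧸ W) →L[ℝ] (V ⧸ W)) := fun g =>
    LinearMap.toContinuousLinearMap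
      (Submodule.mapQ W W (ρ g).toLinearMap (fun v hv => hWinv g v hv))
  have hrhoQ' : ∀ g v, rhoQ' g (W.mkQ v) = W.mkQ (ρ g v) := by
    intro g v
    show Submodule.mapQ W W (ρ g).toLinearMap (fun v hv => hWinv g v hv) (W.mkQ v)
        = W.mkQ (ρ g v)
    rw [Submodule.mkQ_apply, Submodule.mapQ_apply, Submodule.mkQ_apply]
    rfl
  set C : ℝ := max Cb 1 with hCdef
  have hC0 : (0:ℝ) < C := lt_of_lt_of_le one_pos (le_max_right _ _)
  have hCQ' : ∀ g, ‖rhoQ' g‖ ≤ C := by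
    intro g
    apply ContinuousLinearMap.opNorm_le_bound _ (le_of_lt hC0)
    intro x
    apply le_of_forall_pos_le_add
    intro δ hδ
    obtain ⟨v, hv1, hv2⟩ := Submodule.Quotient.norm_mk_lt x (div_pos hδ hC0)
    have hv1' : W.mkQ v = x := by rw [Submodule.mkQ_apply]; exact hv1
    have h1 : rhoQ' g x = W.mkQ (ρ g v) := by rw [← hv1', hrhoQ']
    have hv2' : ‖v‖ < ‖x‖ + δ / C := hv2
    calc ‖rhoQ' g x‖ = ‖W.mkQ (ρ g v)‖ := by rw [h1]
      _ ≤ ‖ρ g v‖ := by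
          rw [Submodule.mkQ_apply]
          exact Submodule.Quotient.norm_mk_le W (ρ g v)
      _ ≤ ‖ρ g‖ * ‖v‖ := ContinuousLinearMap.le_opNorm _ _
      _ ≤ C * ‖v‖ := by
          apply mul_le_mul_of_nonneg_right _ (norm_nonneg v)
          exact le_trans (hCb g) (le_max_left _ _)
      _ ≤ C * (‖x‖ + δ / C) := by
          apply mul_le_mul_of_nonneg_left (le_of_lt hv2') (le_of_lt hC0)
      _ = C * ‖x‖ + δ := by
          have : C ≠ 0 := ne_of_gt hC0
          field_simp
  let P : Stmt8Aux.Pack G V (V ⧸ W) :=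
    { rho := ρ
      pi := pi0
      rhoQ := rhoQ'
      L0 := L0'
      C := C
      hC1 := le_max_right _ _
      hC := fun g => le_trans (hCb g) (le_max_left _ _)
      hCQ := hCQ'
      hcomm := fun g v => by rw [hpi0, hpi0, hrhoQ']
      hL0 := fun x => by rw [hpi0, hL0', hsx]
      hap := hap }
  obtain ⟨Lst, hlift, hinvar⟩ := P.exists_invariant_lift
  have hlift' : ∀ x, W.mkQ (Lst x) = x := hlift
  have hinv' : ∀ g x, ρ g (Lst x) = Lst (P.rhoQ g x) := by
    intro g x
    have h := congrArg (fun T : (V ⧸ W) →L[ℝ] V => T (P.rhoQ g x)) (hinvar g)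
    simp only [ContinuousLinearMap.comp_apply] at h
    rwa [P.rhoQ_inv_apply g x] at h
  refine ⟨LinearMap.range (Lst : (V ⧸ W) →ₗ[ℝ] V), inferInstance, ?_, ?_⟩
  · rintro g v ⟨x, rfl⟩
    refine ⟨P.rhoQ g x, ?_⟩
    simp only [ContinuousLinearMap.coe_coe] at *
    exact (hinv' g x).symm
  · constructor
    · rw [Submodule.disjoint_def]
      rintro v ⟨x, rfl⟩ hvW
      simp only [ContinuousLinearMap.coe_coe] at *
      have h0 : W.mkQ (Lst x) = 0 := by
        rw [Submodule.mkQ_apply]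
        exact (Submodule.Quotient.mk_eq_zero W).2 hvW
      have hx0 : x = 0 := by rw [← hlift' x, h0]
      rw [hx0, map_zero]
    · rw [codisjoint_iff, eq_top_iff]
      intro v _
      have hmem : v - Lst (W.mkQ v) ∈ W := by
        rw [← Submodule.Quotient.mk_eq_zero W, ← Submodule.mkQ_apply, map_sub,
          hlift' (W.mkQ v), sub_self]
      apply Submodule.mem_sup.mpr
      exact ⟨Lst (W.mkQ v), ⟨W.mkQ v, rfl⟩, v - Lst (W.mkQ v), hmem, by abel⟩
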